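/- Let C → D be an étale ring homomorphism of integral domains of prime characteristic p. Then for every e ≥ 1, the natural map D ⊗_C (^e C) → (^e D) is an isomorphism, where ^e(−) denotes restriction of scalars along the e-th power of the Frobenius endomorphism. -/

import Mathlib

set_option maxHeartbeats 1000000
set_option synthInstance.maxHeartbeats 400000

universe u

/-- The restriction of scalars `^e A`: the ring `A` viewed as an `A`-algebra via the `e`-th
power `F^e` of the Frobenius (for rings of characteristic `p`). -/
def FrobRes (_p _e : ℕ) (A : Type*) : Type _ := A

instance (p e : ℕ) (A : Type*) [CommRing A] : CommRing (FrobRes p e A) :=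
  inferInstanceAs (CommRing A)

instance (p e : ℕ) (A : Type*) [CommRing A] [IsDomain A] : IsDomain (FrobRes p e A) :=
  inferInstanceAs (IsDomain A)

/-- The `A`-algebra structure on `^e A` given by `a ↦ a^{p^e}`. -/
instance FrobRes.algebraSelf (p e : ℕ) (A : Type*) [CommRing A] [Fact p.Prime] [CharP A p] :
    Algebra A (FrobRes p e A) :=
  (iterateFrobenius A p e).toAlgebra

/-- For `C → D`, the `C`-algebra structure on `^e D` given by `c ↦ φ(c)^{p^e}`. -/
instance FrobRes.algebraBase (p e : ℕ) (C D : Type*) [CommRing C] [CommRing D]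
    [Fact p.Prime] [CharP D p] [Algebra C D] : Algebra C (FrobRes p e D) :=
  ((iterateFrobenius D p e).comp (algebraMap C D)).toAlgebra

/-- The `C`-algebra map `D → ^e D`, `d ↦ d^{p^e}`. -/
def FrobRes.frobAlgHom (p e : ℕ) (C D : Type*) [CommRing C] [CommRing D]
    [Fact p.Prime] [CharP D p] [Algebra C D] : D →ₐ[C] FrobRes p e D :=
  { iterateFrobenius D p e with commutes' := fun _ => rfl }

/-- The `C`-algebra map `^e C → ^e D` induced by the structure map `C → D`. -/
def FrobRes.baseAlgHom (p e : ℕ) (C D : Type*) [CommRing C] [CommRing D]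
    [Fact p.Prime] [CharP C p] [CharP D p] [Algebra C D] :
    FrobRes p e C →ₐ[C] FrobRes p e D :=
  { (algebraMap C D : C →+* D) with
    commutes' := fun c => by
      show algebraMap C D (iterateFrobenius C p e c) =
        (iterateFrobenius D p e) (algebraMap C D c)
      simp [iterateFrobenius_def, map_pow] }

open TensorProduct in
/-- A finitely generated nil ideal is nilpotent. -/
lemma FrobProof.aux_isNilpotent_of_fg {R : Type*} [CommRing R] {I : Ideal R} (hfg : I.FG)
    (h : ∀ x ∈ I, ∃ n : ℕ, x ^ n = 0) : IsNilpotent I := by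
  have hrad : I ≤ Ideal.radical ⊥ := fun x hx => by
    obtain ⟨m, hm⟩ := h x hx
    exact ⟨m, by simp [hm]⟩
  obtain ⟨n, hn⟩ := Ideal.exists_pow_le_of_le_radical_of_fg hrad hfg
  exact ⟨n, le_bot_iff.mp hn⟩

open TensorProduct in
/-- A finite unramified algebra over a field `κ` of characteristic `p` in which every
`p^e`-th power comes from `κ` is generated by `κ`. -/
lemma FrobProof.aux_field_surj (p : ℕ) (hp : p.Prime) (e : ℕ) (κ E : Type u) [Field κ]
    [CommRing E] [Algebra κ E] [Algebra.FormallyUnramified κ E] [Module.Finite κ E]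
    [CharP κ p] (H : ∀ x : E, ∃ c : κ, x ^ p ^ e = algebraMap κ E c) :
    Function.Surjective (algebraMap κ E) := by
  rcases subsingleton_or_nontrivial E with h | h
  · exact fun x => ⟨0, Subsingleton.elim _ _⟩
  classical
  have hT : Nontrivial (E ⊗[κ] E) := by
    rw [← not_subsingleton_iff_nontrivial, ← rank_zero_iff (R := κ), rank_tensorProduct',
      mul_eq_zero, or_self, rank_zero_iff, not_subsingleton_iff_nontrivial]
    infer_instance
  haveI : Algebra.FormallyUnramified κ (E ⊗[κ] E) := Algebra.FormallyUnramified.comp κ E _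
  haveI : Module.Finite κ (E ⊗[κ] E) := Module.Finite.tensorProduct κ E E
  haveI hred : IsReduced (E ⊗[κ] E) := Algebra.FormallyUnramified.isReduced_of_field κ _
  haveI : CharP (E ⊗[κ] E) p := charP_of_injective_algebraMap (algebraMap κ _).injective p
  haveI : ExpChar (E ⊗[κ] E) p := .prime hp
  intro x
  obtain ⟨c, hc⟩ := H x
  have H0 : (1 ⊗ₜ x - x ⊗ₜ 1 : E ⊗[κ] E) ^ p ^ e = 0 := by
    rw [sub_pow_expChar_pow, Algebra.TensorProduct.tmul_pow, one_pow, Algebra.TensorProduct.tmul_pow, one_pow,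
      hc, Algebra.algebraMap_eq_smul_one, TensorProduct.smul_tmul, sub_self]
  have Hx : (1 ⊗ₜ x : E ⊗[κ] E) = x ⊗ₜ 1 :=
    sub_eq_zero.mp (IsNilpotent.eq_zero ⟨_, H0⟩)
  by_cases h' : LinearIndependent κ ![1, x]
  · have h := (linearIndepOn_id_range_iff h'.injective).mpr h'
    let S := h.extend (Set.subset_univ _)
    let a : S := ⟨1, h.subset_extend _ (by simp)⟩
    have ha : Module.Basis.extend h a = 1 := by simp; rfl
    let b : S := ⟨x, h.subset_extend _ (by simp)⟩
    have hb : Module.Basis.extend h b = x := by simp; rfl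
    by_cases hab : a = b
    · obtain rfl : 1 = x := congr_arg Subtype.val hab
      exact ⟨1, map_one _⟩
    have := DFunLike.congr_fun
      (DFunLike.congr_arg ((Module.Basis.extend h).tensorProduct (Module.Basis.extend h)).repr Hx) (a, b)
    simp only [Module.Basis.tensorProduct_repr_tmul_apply, ← ha, ← hb, Module.Basis.repr_self, smul_eq_mul,
      Finsupp.single_apply, hab, Ne.symm hab, ↓reduceIte, mul_one, mul_zero, one_ne_zero] at this
  · rw [LinearIndependent.pair_iff] at h'
    simp only [not_forall, not_and, exists_prop] at h'
    obtain ⟨a, b, heq, hab⟩ := h'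
    have : IsUnit b := by
      rw [isUnit_iff_ne_zero]
      rintro rfl
      rw [zero_smul, ← Algebra.algebraMap_eq_smul_one, add_zero,
        (injective_iff_map_eq_zero' _).mp (algebraMap κ E).injective] at heq
      cases hab heq rfl
    use (-this.unit⁻¹ * a)
    rw [map_mul, ← Algebra.smul_def, Algebra.algebraMap_eq_smul_one,
      eq_neg_iff_add_eq_zero.mpr heq, smul_neg, neg_smul, neg_neg, smul_smul,
      this.val_inv_mul, one_smul]

/-- Fiberwise statement: modulo a maximal ideal of `R`, every element of an unramified
finite `R`-algebra all of whose `p^e`-th powers come from `R` is congruent to an element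
of `R`. -/
lemma FrobProof.aux_fiber (p : ℕ) (hp : p.Prime) (e : ℕ) (R S : Type u) [CommRing R]
    [CommRing S] [Algebra R S] [CharP R p] [Algebra.FormallyUnramified R S]
    [Module.Finite R S]
    (hpow : ∀ s : S, ∃ r : R, s ^ p ^ e = algebraMap R S r) (m : Ideal R) (hm : m.IsMaximal)
    (s : S) : ∃ r : R, s - algebraMap R S r ∈ Ideal.map (algebraMap R S) m := by
  haveI : CharP (R ⧸ m) p := (CharP.charP_iff_prime_eq_zero hp).mpr (by
    rw [← map_natCast (Ideal.Quotient.mk m) p, CharP.cast_eq_zero, map_zero])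
  letI : Field (R ⧸ m) := Ideal.Quotient.field m
  haveI : Algebra.FormallyUnramified (R ⧸ m) (S ⧸ Ideal.map (algebraMap R S) m) :=
    Algebra.FormallyUnramified.of_restrictScalars R _ _
  haveI : Module.Finite R (S ⧸ Ideal.map (algebraMap R S) m) :=
    Module.Finite.of_surjective (Ideal.Quotient.mkₐ R _).toLinearMap
      Ideal.Quotient.mk_surjective
  haveI : Module.Finite (R ⧸ m) (S ⧸ Ideal.map (algebraMap R S) m) :=
    Module.Finite.of_restrictScalars_finite R _ _
  have hsurj := FrobProof.aux_field_surj p hp e (R ⧸ m) (S ⧸ Ideal.map (algebraMap R S) m)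
    (fun x => by
      obtain ⟨d, rfl⟩ := Ideal.Quotient.mk_surjective x
      obtain ⟨r, hr⟩ := hpow d
      exact ⟨Ideal.Quotient.mk m r, by
        rw [Ideal.Quotient.algebraMap_quotient_map_quotient, ← map_pow, hr]⟩)
  obtain ⟨a, ha⟩ := hsurj (Ideal.Quotient.mk _ s)
  obtain ⟨r, rfl⟩ := Ideal.Quotient.mk_surjective a
  rw [Ideal.Quotient.algebraMap_quotient_map_quotient] at ha
  exact ⟨r, Ideal.Quotient.eq.mp ha.symm⟩

open Polynomial in
/-- If `D` is a finite-type, formally unramified algebra over `C` in characteristic `p`, then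
`D` is generated over `C` by `p^e`-th powers. -/
lemma FrobProof.aux_adjoin_pow_top (p : ℕ) [Fact p.Prime] (e : ℕ) (C D : Type u) [CommRing C]
    [CommRing D] [Nontrivial D] [CharP D p] [Algebra C D] [Algebra.FormallyUnramified C D]
    [Algebra.FiniteType C D] :
    Algebra.adjoin C (Set.range fun d : D => d ^ p ^ e) = ⊤ := by
  classical
  have hp : p.Prime := Fact.out
  set q := p ^ e with hqdef
  have hq0 : q ≠ 0 := pow_ne_zero _ hp.ne_zero
  set D' := Algebra.adjoin C (Set.range fun d : D => d ^ q) with hD'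
  haveI : Algebra.IsIntegral D' D := by
    refine ⟨fun x => ?_⟩
    refine ⟨X ^ q - Polynomial.C (⟨x ^ q, Algebra.subset_adjoin ⟨x, rfl⟩⟩ : D'),
      monic_X_pow_sub_C _ hq0, ?_⟩
    simp only [Polynomial.eval₂_sub, Polynomial.eval₂_X_pow, Polynomial.eval₂_C]
    exact sub_eq_zero.mpr rfl
  haveI : Algebra.FiniteType D' D := Algebra.FiniteType.of_restrictScalars_finiteType C D' D
  haveI : Module.Finite D' D := Algebra.IsIntegral.finite
  haveI : Algebra.FormallyUnramified D' D := Algebra.FormallyUnramified.of_restrictScalars C D' D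
  haveI : CharP D' p := RingHom.charP D'.val.toRingHom Subtype.val_injective p
  have hpow : ∀ s : D, ∃ r : D', s ^ q = algebraMap D' D r :=
    fun s => ⟨⟨s ^ q, Algebra.subset_adjoin ⟨s, rfl⟩⟩, rfl⟩
  set N : Submodule D' D := Submodule.span D' {1} with hN
  have key : ∀ (m : Ideal D'), m.IsMaximal → (⊤ : Submodule D' D) ≤ N ⊔ m • ⊤ := by
    intro m hm d _
    obtain ⟨r, hr⟩ := FrobProof.aux_fiber p hp e D' D hpow m hm d
    have h1 : algebraMap D' D r ∈ N := Submodule.mem_span_singleton.mpr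
      ⟨r, by rw [Algebra.algebraMap_eq_smul_one]⟩
    have h2 : d - algebraMap D' D r ∈ (m • ⊤ : Submodule D' D) := by
      rw [Ideal.smul_top_eq_map]
      exact hr
    have : d = algebraMap D' D r + (d - algebraMap D' D r) := by ring
    rw [this]
    exact Submodule.add_mem_sup h1 h2
  have hNtop : N = ⊤ := by
    have hann : ∀ (m : Ideal D'), m.IsMaximal → ¬(Module.annihilator D' (D ⧸ N) ≤ m) := by
      intro m hm hle
      have htop : (⊤ : Submodule D' (D ⧸ N)) ≤ m • ⊤ := by
        intro x _
        obtain ⟨d, rfl⟩ := N.mkQ_surjective x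
        have hd := key m hm (Submodule.mem_top (x := d))
        have hmem : N.mkQ d ∈ Submodule.map N.mkQ (N ⊔ m • ⊤) := ⟨d, hd, rfl⟩
        rw [Submodule.map_sup, Submodule.map_smul'', Submodule.map_top, Submodule.range_mkQ]
          at hmem
        simpa using hmem
      obtain ⟨r, hr1, hr0⟩ :=
        Submodule.exists_sub_one_mem_and_smul_eq_zero_of_fg_of_le_smul m ⊤
          Module.Finite.fg_top htop
      have hrann : r ∈ Module.annihilator D' (D ⧸ N) :=
        Module.mem_annihilator.mpr fun x => hr0 x trivial
      have : (1 : D') ∈ m := by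
        have := hle hrann
        simpa using m.sub_mem this hr1
      exact hm.ne_top (m.eq_top_of_isUnit_mem this isUnit_one)
    have hanntop : Module.annihilator D' (D ⧸ N) = ⊤ := by
      by_contra hne
      obtain ⟨m, hm, hle⟩ := Ideal.exists_le_maximal _ hne
      exact hann m hm hle
    have hzero : ∀ x : D ⧸ N, x = 0 := by
      intro x
      have : (1 : D') ∈ Module.annihilator D' (D ⧸ N) := hanntop ▸ Submodule.mem_top
      simpa using Module.mem_annihilator.mp this x
    rw [Submodule.eq_top_iff']
    intro d
    have := hzero (N.mkQ d)
    rwa [Submodule.mkQ_apply, Submodule.Quotient.mk_eq_zero] at this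
  rw [eq_top_iff]
  intro d _
  have hd : d ∈ N := hNtop ▸ Submodule.mem_top
  obtain ⟨a, ha⟩ := Submodule.mem_span_singleton.mp hd
  rw [← ha, Algebra.smul_def]
  exact mul_mem a.2 (one_mem D')

section FrobProofInstances

variable (p e : ℕ) (C D : Type u) [CommRing C] [CommRing D] [Fact p.Prime]
  [CharP C p] [CharP D p] [Algebra C D]

/-- `^e C → ^e D` is "the same" ring map as `C → D`. -/
instance FrobProof.instAlgebraFrobRes : Algebra (FrobRes p e C) (FrobRes p e D) :=
  inferInstanceAs (Algebra C D)

instance FrobProof.instTowerFrobRes : IsScalarTower C (FrobRes p e C) (FrobRes p e D) :=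
  IsScalarTower.of_algebraMap_eq fun c => (map_pow (algebraMap C D) c (p ^ e)).symm

instance FrobProof.instEtaleFrobRes [Algebra.Etale C D] :
    Algebra.Etale (FrobRes p e C) (FrobRes p e D) :=
  inferInstanceAs (Algebra.Etale C D)

end FrobProofInstances

open TensorProduct in
/-- Let `C → D` be an étale homomorphism of integral domains of prime characteristic `p`. Then
for every `e ≥ 1` the natural map `D ⊗_C (^e C) → ^e D`, `d ⊗ c ↦ d^{p^e}·c`, is an
isomorphism, where `^e(−)` is restriction of scalars along the `e`-th power of Frobenius. -/
theorem etale_frobenius_baseChange_bijective (p : ℕ) [Fact p.Prime] (C D : Type u)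
    [CommRing C] [CommRing D] [IsDomain C] [IsDomain D] [CharP C p] [CharP D p]
    [Algebra C D] [Algebra.Etale C D] (e : ℕ) (he : 1 ≤ e) :
    Function.Bijective
      (Algebra.TensorProduct.productMap
        (FrobRes.frobAlgHom p e C D) (FrobRes.baseAlgHom p e C D) :
        D ⊗[C] FrobRes p e C → FrobRes p e D) := by
  classical
  have hp : p.Prime := Fact.out
  have hq0 : p ^ e ≠ 0 := pow_ne_zero _ hp.ne_zero
  set Ψ : FrobRes p e C ⊗[C] D →ₐ[FrobRes p e C] FrobRes p e D :=
    Algebra.TensorProduct.lift (Algebra.ofId (FrobRes p e C) (FrobRes p e D))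
      (FrobRes.frobAlgHom p e C D) (fun _ _ => Commute.all _ _) with hΨdef
  have hΨ_tmul : ∀ (a : FrobRes p e C) (d : D),
      Ψ (a ⊗ₜ d) = algebraMap C D a * d ^ p ^ e := by
    intro a d
    rw [hΨdef, Algebra.TensorProduct.lift_tmul]
    show algebraMap C D a * iterateFrobenius D p e d = _
    rw [iterateFrobenius_def]
  -- Surjectivity
  have hsurjΨ : Function.Surjective Ψ := by
    have htop := FrobProof.aux_adjoin_pow_top p e C D
    intro x
    have hx : (x : D) ∈ Algebra.adjoin C (Set.range fun d : D => d ^ p ^ e) := by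
      rw [htop]; trivial
    refine Algebra.adjoin_induction (p := fun d _ => ∃ b, (show D from Ψ b) = d) ?_ ?_ ?_ ?_ hx
    · rintro _ ⟨y, rfl⟩
      exact ⟨1 ⊗ₜ y, by rw [hΨ_tmul]; show algebraMap C D 1 * y ^ p ^ e = y ^ p ^ e; rw [map_one, one_mul]⟩
    · intro c
      exact ⟨(show FrobRes p e C from c) ⊗ₜ 1, by rw [hΨ_tmul, one_pow, mul_one]⟩
    · rintro x y _ _ ⟨bx, rfl⟩ ⟨by', rfl⟩
      exact ⟨bx + by', map_add _ _ _⟩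
    · rintro x y _ _ ⟨bx, rfl⟩ ⟨by', rfl⟩
      exact ⟨bx * by', map_mul _ _ _⟩
  -- Kernel consists of elements with vanishing `p^e`-th power
  have hker : ∀ b : FrobRes p e C ⊗[C] D, Ψ b = 0 → b ^ p ^ e = 0 := by
    rcases subsingleton_or_nontrivial (FrobRes p e C ⊗[C] D) with hsub | hnt
    · intro b _; exact Subsingleton.elim _ _
    haveI : CharP (FrobRes p e C ⊗[C] D) p := (CharP.charP_iff_prime_eq_zero hp).mpr (by
      rw [← map_natCast (algebraMap C (FrobRes p e C ⊗[C] D)) p, CharP.cast_eq_zero, map_zero])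
    haveI : ExpChar (FrobRes p e C ⊗[C] D) p := .prime hp
    have key : ∀ b : FrobRes p e C ⊗[C] D,
        (Algebra.TensorProduct.includeRight (R := C) (A := FrobRes p e C) (B := D) (Ψ b)
          : FrobRes p e C ⊗[C] D) = b ^ p ^ e := by
      intro b
      induction b using TensorProduct.induction_on with
      | zero => rw [map_zero]; exact (map_zero (Algebra.TensorProduct.includeRight (R := C) (A := FrobRes p e C) (B := D))).trans (zero_pow hq0).symm
      | tmul a d =>
        rw [hΨ_tmul, Algebra.TensorProduct.tmul_pow]
        show (1 : FrobRes p e C) ⊗ₜ[C] (algebraMap C D a * d ^ p ^ e) = _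
        have h1 : ∀ (c : C) (y : D), (1 : FrobRes p e C) ⊗ₜ[C] (algebraMap C D c * y) =
            (c • (1 : FrobRes p e C)) ⊗ₜ[C] y := fun c y => by
          rw [← Algebra.smul_def, ← TensorProduct.smul_tmul]
        refine (h1 a _).trans ?_
        congr 1
        refine (Algebra.smul_def _ _).trans ((mul_one _).trans ?_)
        show iterateFrobenius C p e a = _
        exact iterateFrobenius_def (R := C) p e a
      | add x y hx hy =>
        rw [map_add]
        exact (map_add (Algebra.TensorProduct.includeRight (R := C) (A := FrobRes p e C) (B := D)) (Ψ x) (Ψ y)).trans ((congrArg₂ (· + ·) hx hy).trans (by rw [add_pow_expChar_pow]))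
    intro b hb
    have := key b
    rw [hb] at this
    replace this := (map_zero (Algebra.TensorProduct.includeRight (R := C) (A := FrobRes p e C) (B := D))).symm.trans this
    exact this.symm
  -- The kernel is a finitely generated nil ideal, hence nilpotent
  have hfg : (RingHom.ker Ψ).FG := Algebra.FinitePresentation.ker_fG_of_surjective Ψ hsurjΨ
  have hnil : IsNilpotent (RingHom.ker Ψ) :=
    FrobProof.aux_isNilpotent_of_fg hfg fun x hx => ⟨p ^ e, hker x hx⟩
  -- Formal smoothness gives a section of the quotient map, unramifiedness makes it inverse
  haveI : Algebra.FormallySmooth (FrobRes p e C)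
      ((FrobRes p e C ⊗[C] D) ⧸ RingHom.ker Ψ) :=
    Algebra.FormallySmooth.of_equiv (Ideal.quotientKerAlgEquivOfSurjective hsurjΨ).symm
  set s := Algebra.FormallySmooth.lift (RingHom.ker Ψ) hnil
    (AlgHom.id (FrobRes p e C) ((FrobRes p e C ⊗[C] D) ⧸ RingHom.ker Ψ)) with hsdef
  have huniq : s.comp (Ideal.Quotient.mkₐ (FrobRes p e C) (RingHom.ker Ψ)) =
      AlgHom.id (FrobRes p e C) (FrobRes p e C ⊗[C] D) := by
    refine Algebra.FormallyUnramified.lift_unique _ hnil _ _ ?_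
    rw [← AlgHom.comp_assoc, hsdef, Algebra.FormallySmooth.comp_lift, AlgHom.id_comp,
      AlgHom.comp_id]
  have hinj : Function.Injective Ψ := by
    intro x y hxy
    have hmk : Ideal.Quotient.mkₐ (FrobRes p e C) (RingHom.ker Ψ) x =
        Ideal.Quotient.mkₐ (FrobRes p e C) (RingHom.ker Ψ) y := by
      simp only [Ideal.Quotient.mkₐ_eq_mk]
      rw [Ideal.Quotient.eq]
      exact RingHom.mem_ker.mpr (by rw [map_sub, hxy, sub_self])
    calc x = s (Ideal.Quotient.mkₐ _ (RingHom.ker Ψ) x) := (AlgHom.congr_fun huniq x).symm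
      _ = s (Ideal.Quotient.mkₐ _ (RingHom.ker Ψ) y) := by rw [hmk]
      _ = y := AlgHom.congr_fun huniq y
  -- Transport along the commutativity isomorphism of the tensor product
  have hcomm : ∀ x : D ⊗[C] FrobRes p e C,
      Algebra.TensorProduct.productMap (FrobRes.frobAlgHom p e C D)
          (FrobRes.baseAlgHom p e C D) x
        = Ψ (Algebra.TensorProduct.comm C D (FrobRes p e C) x) := by
    intro x
    induction x using TensorProduct.induction_on with
    | zero => rw [map_zero, map_zero, map_zero]
    | tmul d c =>
      rw [Algebra.TensorProduct.productMap_apply_tmul, Algebra.TensorProduct.comm_tmul,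
        hΨ_tmul]
      show iterateFrobenius D p e d * algebraMap C D c = _
      rw [iterateFrobenius_def, mul_comm]
    | add x y hx hy => rw [map_add, map_add, map_add, hx, hy]
  rw [show ⇑(Algebra.TensorProduct.productMap (FrobRes.frobAlgHom p e C D)
      (FrobRes.baseAlgHom p e C D)) =
      ⇑Ψ ∘ ⇑(Algebra.TensorProduct.comm C D (FrobRes p e C)) from funext hcomm]
  exact Function.Bijective.comp ⟨hinj, hsurjΨ⟩ (AlgEquiv.bijective _)
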